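/- Let (P_T, D_t) be a drift process. The process has drift if and only if there exist P_T-non-null time windows W, W' ⊆ T such that the mean distributions differ: D_W ≠ D_{W'}. -/

import Mathlib

open MeasureTheory ProbabilityTheory

private lemma aux_ae_eq_real {α : Type*} [MeasurableSpace α] (P : Measure α)
    (κ : Kernel α ℝ) [IsFiniteKernel κ] (m : Measure ℝ) [IsFiniteMeasure m]
    (h : ∀ B : Set ℝ, MeasurableSet B → ∀ᵐ t ∂P, κ t B = m B) :
    ∀ᵐ t ∂P, κ t = m := by
  suffices h' : ∀ᵐ t ∂P, ∀ ⦃B⦄, MeasurableSet B → κ t B = m B by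
    filter_upwards [h'] with t ht
    ext B hB
    exact ht hB
  apply MeasurableSpace.ae_induction_on_inter Real.borel_eq_generateFrom_Iic_rat
    Real.isPiSystem_Iic_rat
  · simp
  · simp only [Set.iUnion_singleton_eq_range, Set.mem_range, forall_exists_index,
      forall_apply_eq_imp_iff]
    exact ae_all_iff.2 fun q ↦ h _ measurableSet_Iic
  · filter_upwards [h Set.univ MeasurableSet.univ] with t huniv B hB heq
    rw [measure_compl hB (measure_ne_top _ _), heq, huniv,
      measure_compl hB (measure_ne_top _ _)]
  · refine ae_of_all _ fun t f hdisj hf heq ↦ ?_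
    rw [measure_iUnion hdisj hf, measure_iUnion hdisj hf]
    exact tsum_congr heq

private lemma aux_ae_eq {α Ω : Type*} [MeasurableSpace α] [MeasurableSpace Ω]
    [StandardBorelSpace Ω] [Nonempty Ω] (P : Measure α)
    (κ : Kernel α Ω) [IsFiniteKernel κ] (m : Measure Ω) [IsFiniteMeasure m]
    (h : ∀ B : Set Ω, MeasurableSet B → ∀ᵐ t ∂P, κ t B = m B) :
    ∀ᵐ t ∂P, κ t = m := by
  let f := MeasureTheory.embeddingReal Ω
  have hf := MeasureTheory.measurableEmbedding_embeddingReal Ω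
  have h' : ∀ᵐ t ∂P, Kernel.map κ f t = m.map f := by
    refine aux_ae_eq_real P (Kernel.map κ f) (m.map f) fun B hB ↦ ?_
    filter_upwards [h (f ⁻¹' B) (hf.measurable hB)] with t ht
    rw [Kernel.map_apply' _ hf.measurable _ hB, Measure.map_apply hf.measurable hB, ht]
  filter_upwards [h'] with t ht
  ext B hB
  have him : MeasurableSet (f '' B) := hf.measurableSet_image.2 hB
  have h2 : κ t (f ⁻¹' (f '' B)) = m (f ⁻¹' (f '' B)) := by
    have h3 : Kernel.map κ f t (f '' B) = m.map f (f '' B) :=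
      congrArg (fun μ : Measure ℝ => μ (f '' B)) ht
    rw [Kernel.map_apply' _ hf.measurable _ him,
      Measure.map_apply hf.measurable him] at h3
    exact h3
  rwa [Set.preimage_image_eq _ hf.injective] at h2

/-- A drift process has drift iff there are two `P`-non-null time windows
whose mean distributions differ. -/
theorem drift_iff_window_means_differ {d : ℕ}
    (P : Measure (Set.Icc (0:ℝ) 1)) [IsProbabilityMeasure P]
    (κ : Kernel (Set.Icc (0:ℝ) 1) (Fin d → ℝ)) [IsMarkovKernel κ] :
    (P.prod P) {p | κ p.1 ≠ κ p.2} > 0 ↔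
      ∃ W W' : Set (Set.Icc (0:ℝ) 1), MeasurableSet W ∧ MeasurableSet W' ∧
        P W ≠ 0 ∧ P W' ≠ 0 ∧
        (P[|W]).bind (fun t => κ t) ≠ (P[|W']).bind (fun t => κ t) := by
  constructor
  · intro hpos
    by_contra hno
    push_neg at hno
    set m : Measure (Fin d → ℝ) := P.bind (fun t => κ t) with hm
    have hmP : IsProbabilityMeasure m := by
      constructor
      rw [hm, Measure.bind_apply MeasurableSet.univ (Kernel.measurable κ).aemeasurable]
      simp
    -- every non-null window has mean `m`
    have hwin : ∀ W : Set (Set.Icc (0:ℝ) 1), MeasurableSet W → P W ≠ 0 →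
        (P[|W]).bind (fun t => κ t) = m := by
      intro W hWm hPW
      have := hno W Set.univ hWm MeasurableSet.univ hPW (by simp)
      rwa [ProbabilityTheory.cond_univ] at this
    -- for each measurable B, κ · B = m B a.e.
    have hB : ∀ B : Set (Fin d → ℝ), MeasurableSet B → ∀ᵐ t ∂P, κ t B = m B := by
      intro B hBm
      refine ae_eq_of_forall_setLIntegral_eq_of_sigmaFinite
        (Kernel.measurable_coe κ hBm) measurable_const (fun W hWm _ ↦ ?_)
      rw [setLIntegral_const]
      rcases eq_or_ne (P W) 0 with hPW | hPW
      · rw [hPW, mul_zero]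
        exact setLIntegral_measure_zero _ _ hPW
      · have hbind := congrArg (fun μ : Measure (Fin d → ℝ) => μ B) (hwin W hWm hPW)
        simp only [Measure.bind_apply hBm (Kernel.measurable κ).aemeasurable] at hbind
        rw [ProbabilityTheory.cond, lintegral_smul_measure, smul_eq_mul] at hbind
        have hWne : P W ≠ ⊤ := measure_ne_top P W
        calc ∫⁻ t in W, κ t B ∂P
            = P W * ((P W)⁻¹ * ∫⁻ t in W, κ t B ∂P) := by
              rw [← mul_assoc, ENNReal.mul_inv_cancel hPW hWne, one_mul]
          _ = P W * m B := by
              rw [hbind, hm, Measure.bind_apply hBm (Kernel.measurable κ).aemeasurable]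
          _ = m B * P W := mul_comm _ _
    have hae : ∀ᵐ t ∂P, κ t = m := aux_ae_eq P κ m hB
    obtain ⟨N, hNsub, hNmeas, hN0⟩ :=
      exists_measurable_superset_of_null (ae_iff.mp hae)
    have hsub : {p : (Set.Icc (0:ℝ) 1) × (Set.Icc (0:ℝ) 1) | κ p.1 ≠ κ p.2} ⊆
        (N ×ˢ Set.univ) ∪ (Set.univ ×ˢ N) := by
      rintro ⟨t, s⟩ hts
      by_cases h1 : κ t = m
      · by_cases h2 : κ s = m
        · exact absurd (h1.trans h2.symm) hts
        · exact Or.inr ⟨Set.mem_univ _, hNsub h2⟩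
      · exact Or.inl ⟨hNsub h1, Set.mem_univ _⟩
    have hzero : (P.prod P) {p | κ p.1 ≠ κ p.2} = 0 := by
      refine measure_mono_null hsub (measure_union_null ?_ ?_)
      · rw [Measure.prod_prod, hN0, zero_mul]
      · rw [Measure.prod_prod, hN0, mul_zero]
    rw [hzero] at hpos
    exact lt_irrefl _ hpos
  · rintro ⟨W, W', hWm, hW'm, hPW, hPW', hne⟩
    by_contra h
    have h0 : (P.prod P) {p | κ p.1 ≠ κ p.2} = 0 := by
      simpa [pos_iff_ne_zero] using h
    obtain ⟨G, hSG, hGmeas, hG0⟩ := exists_measurable_superset_of_null h0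
    rw [Measure.measure_prod_null hGmeas] at hG0
    have : NeZero P := ⟨IsProbabilityMeasure.ne_zero P⟩
    obtain ⟨t0, ht0⟩ := hG0.exists
    simp only [Pi.zero_apply] at ht0
    have hconst : ∀ᵐ s ∂P, κ s = κ t0 := by
      have hG' : ∀ᵐ s ∂P, (t0, s) ∉ G := by
        rw [ae_iff]
        simpa [Set.preimage] using ht0
      filter_upwards [hG'] with s hs
      by_contra hne'
      exact hs (hSG (Ne.symm hne'))
    have key : ∀ V : Set (Set.Icc (0:ℝ) 1), MeasurableSet V → P V ≠ 0 →
        (P[|V]).bind (fun t => κ t) = κ t0 := by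
      intro V hVm hPV
      have hprob : IsProbabilityMeasure (P[|V]) := cond_isProbabilityMeasure hPV
      have habs : P[|V] ≪ P := by
        rw [ProbabilityTheory.cond]
        exact (Measure.absolutelyContinuous_of_le Measure.restrict_le_self).smul_left _
      have hc : ∀ᵐ s ∂(P[|V]), κ s = κ t0 := habs.ae_le hconst
      have : (P[|V]).bind (fun t => κ t) = (P[|V]).bind (fun _ => κ t0) := by
        ext B hBm
        rw [Measure.bind_apply hBm (Kernel.measurable κ).aemeasurable,
          Measure.bind_apply hBm aemeasurable_const]
        refine lintegral_congr_ae ?_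
        filter_upwards [hc] with s hs
        rw [hs]
      rw [this, Measure.bind_const, measure_univ, one_smul]
    exact hne ((key W hWm hPW).trans (key W' hW'm hPW').symm)
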